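/- arXiv:1910.07343 — 2 statements merged into one kernel-verified Lean document; each statement's English description precedes it below -/
import Mathlib

section
/- Under the same Gaussian regression setup with uniform bound S, the squared Hellinger distance is lower bounded: ((1 − e^{−S²/(2σ²)})/(4S²)) · ‖G(F₁) − G(F₂)‖²_{L²(D)} ≤ h²(p_{F₁}, p_{F₂}). -/
open MeasureTheory Real ProbabilityTheory

/-- The Gaussian regression density `y ↦ (2πσ²)^{-1/2} exp(-(y-m)²/(2σ²))`. -/
noncomputable def pdens (σ m y : ℝ) : ℝ :=
  (2 * Real.pi * σ ^ 2) ^ (-(1 / 2 : ℝ)) * Real.exp (-(y - m) ^ 2 / (2 * σ ^ 2))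

lemma pdens_nonneg (σ m y : ℝ) : 0 ≤ pdens σ m y := by
  unfold pdens; positivity

lemma pdens_eq {σ : ℝ} (hσ : 0 < σ) (m : ℝ) :
    pdens σ m = gaussianPDFReal m ⟨σ ^ 2, sq_nonneg σ⟩ := by
  funext y
  simp only [pdens, gaussianPDFReal, NNReal.coe_mk]
  congr 1
  rw [Real.rpow_neg (by positivity), ← Real.sqrt_eq_rpow]
  rfl

lemma integrable_pdens {σ : ℝ} (hσ : 0 < σ) (m : ℝ) :
    Integrable (pdens σ m) := by
  rw [pdens_eq hσ]
  exact integrable_gaussianPDFReal m _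

lemma integral_pdens {σ : ℝ} (hσ : 0 < σ) (m : ℝ) :
    ∫ y, pdens σ m y = 1 := by
  rw [pdens_eq hσ]
  exact integral_gaussianPDFReal_eq_one m (by
    intro h
    have h' := congrArg (fun r : NNReal => (r : ℝ)) h
    simp only [NNReal.coe_zero] at h'
    exact (pow_pos hσ 2).ne' h')

lemma pdens_mul {σ : ℝ} (hσ : 0 < σ) (m₁ m₂ y : ℝ) :
    pdens σ m₁ y * pdens σ m₂ y
      = (Real.exp (-(m₁ - m₂) ^ 2 / (8 * σ ^ 2)) * pdens σ ((m₁ + m₂) / 2) y) ^ 2 := by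
  have hc : (0 : ℝ) < 2 * Real.pi * σ ^ 2 := by positivity
  have hA : ((2 * Real.pi * σ ^ 2) ^ (-(1 / 2 : ℝ))) ^ 2 = (2 * Real.pi * σ ^ 2)⁻¹ := by
    rw [← Real.rpow_natCast ((2 * Real.pi * σ ^ 2) ^ (-(1 / 2 : ℝ))) 2,
      ← Real.rpow_mul hc.le, ← Real.rpow_neg_one]
    norm_num
  have hexp2 : ∀ t : ℝ, Real.exp t ^ 2 = Real.exp (2 * t) := fun t => by
    rw [← Real.exp_nat_mul]; norm_num
  unfold pdens
  calc (2 * Real.pi * σ ^ 2) ^ (-(1 / 2 : ℝ)) * Real.exp (-(y - m₁) ^ 2 / (2 * σ ^ 2)) *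
        ((2 * Real.pi * σ ^ 2) ^ (-(1 / 2 : ℝ)) * Real.exp (-(y - m₂) ^ 2 / (2 * σ ^ 2)))
      = ((2 * Real.pi * σ ^ 2) ^ (-(1 / 2 : ℝ))) ^ 2 *
        Real.exp (-(y - m₁) ^ 2 / (2 * σ ^ 2) + -(y - m₂) ^ 2 / (2 * σ ^ 2)) := by
        rw [Real.exp_add]; ring
    _ = (2 * Real.pi * σ ^ 2)⁻¹ *
        Real.exp (2 * (-(m₁ - m₂) ^ 2 / (8 * σ ^ 2)) + 2 * (-(y - (m₁ + m₂) / 2) ^ 2 / (2 * σ ^ 2))) := by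
        rw [hA]; congr 1; field_simp; ring
    _ = (Real.exp (-(m₁ - m₂) ^ 2 / (8 * σ ^ 2)) *
        ((2 * Real.pi * σ ^ 2) ^ (-(1 / 2 : ℝ)) * Real.exp (-(y - (m₁ + m₂) / 2) ^ 2 / (2 * σ ^ 2)))) ^ 2 := by
        rw [mul_pow, mul_pow, hA, hexp2, hexp2, Real.exp_add]; ring

lemma sqrt_pdens_mul {σ : ℝ} (hσ : 0 < σ) (m₁ m₂ y : ℝ) :
    Real.sqrt (pdens σ m₁ y) * Real.sqrt (pdens σ m₂ y)
      = Real.exp (-(m₁ - m₂) ^ 2 / (8 * σ ^ 2)) * pdens σ ((m₁ + m₂) / 2) y := by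
  rw [← Real.sqrt_mul (pdens_nonneg _ _ _), pdens_mul hσ]
  exact Real.sqrt_sq (mul_nonneg (Real.exp_pos _).le (pdens_nonneg _ _ _))

lemma inner_hellinger {σ : ℝ} (hσ : 0 < σ) (m₁ m₂ : ℝ) :
    ∫ y, (Real.sqrt (pdens σ m₁ y) - Real.sqrt (pdens σ m₂ y)) ^ 2
      = 2 - 2 * Real.exp (-(m₁ - m₂) ^ 2 / (8 * σ ^ 2)) := by
  have hrw : ∀ y, (Real.sqrt (pdens σ m₁ y) - Real.sqrt (pdens σ m₂ y)) ^ 2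
      = pdens σ m₁ y + pdens σ m₂ y
        - 2 * Real.exp (-(m₁ - m₂) ^ 2 / (8 * σ ^ 2)) * pdens σ ((m₁ + m₂) / 2) y := by
    intro y
    rw [sub_sq, Real.sq_sqrt (pdens_nonneg _ _ _), Real.sq_sqrt (pdens_nonneg _ _ _),
      mul_assoc, sqrt_pdens_mul hσ]
    ring
  simp_rw [hrw]
  have h1 : Integrable (fun y => pdens σ m₁ y + pdens σ m₂ y) :=
    (integrable_pdens hσ m₁).add (integrable_pdens hσ m₂)
  have h2 : Integrable
      (fun y => 2 * Real.exp (-(m₁ - m₂) ^ 2 / (8 * σ ^ 2)) * pdens σ ((m₁ + m₂) / 2) y) :=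
    (integrable_pdens hσ ((m₁ + m₂) / 2)).const_mul _
  rw [integral_sub h1 h2,
    integral_add (integrable_pdens hσ m₁) (integrable_pdens hσ m₂),
    integral_pdens hσ, integral_pdens hσ, MeasureTheory.integral_const_mul,
    integral_pdens hσ]
  ring

lemma pointwise_bound {σ S d : ℝ} (hσ : 0 < σ) (hS : 0 < S) (hd0 : 0 ≤ d)
    (hd : d ≤ 4 * S ^ 2) :
    ((1 - Real.exp (-S ^ 2 / (2 * σ ^ 2))) / (4 * S ^ 2)) * d
      ≤ 2 - 2 * Real.exp (-d / (8 * σ ^ 2)) := by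
  set T : ℝ := S ^ 2 / (2 * σ ^ 2) with hT
  have hTpos : 0 < T := by positivity
  set t : ℝ := d / (8 * σ ^ 2) with ht
  have ht0 : 0 ≤ t := by positivity
  have htT : t ≤ T := by
    rw [ht, hT, div_le_div_iff₀ (by positivity) (by positivity)]
    nlinarith
  -- convexity chord bound: exp (-t) ≤ (1 - t/T) + (t/T) * exp (-T)
  have hdiv1 : t / T ≤ 1 := (div_le_one hTpos).2 htT
  have hconv := convexOn_exp.2 (Set.mem_univ (0 : ℝ)) (Set.mem_univ (-T))
    (show (0:ℝ) ≤ 1 - t / T by linarith)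
    (show (0:ℝ) ≤ t / T by positivity)
    (show (1 - t / T) + t / T = 1 by ring)
  have hsmul : (1 - t / T) • (0 : ℝ) + (t / T) • (-T) = -t := by
    simp only [smul_eq_mul]
    field_simp [hTpos.ne']
    ring
  rw [hsmul] at hconv
  have hconv' : Real.exp (-t) ≤ (1 - t / T) + (t / T) * Real.exp (-T) := by
    simpa [Real.exp_zero, smul_eq_mul] using hconv
  -- so 2 - 2 exp(-t) ≥ 2 (t/T) (1 - exp(-T)) ≥ (t/T)(1 - exp(-T))
  have hexpT : Real.exp (-T) ≤ 1 := Real.exp_le_one_iff.2 (by linarith)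
  have h3 : Real.exp (-t) ≤ 1 := Real.exp_le_one_iff.2 (by linarith)
  have h4 : t / T * (1 - Real.exp (-T)) = t / T - t / T * Real.exp (-T) := by ring
  have key : (t / T) * (1 - Real.exp (-T)) ≤ 2 - 2 * Real.exp (-t) := by linarith
  have hrw : ((1 - Real.exp (-S ^ 2 / (2 * σ ^ 2))) / (4 * S ^ 2)) * d
      = (t / T) * (1 - Real.exp (-T)) := by
    rw [hT, ht, neg_div]
    field_simp
    ring
  rw [hrw, show -d / (8 * σ ^ 2) = -t by rw [ht]; ring]
  exact key

/-- Lower bound on the squared Hellinger distance between Gaussian regression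
densities in terms of the `L²(D,μ)` distance of the uniformly bounded regression
functions. -/
theorem L2_le_hellinger_sq {D : Type*} [MeasurableSpace D] (μ : Measure D)
    [IsProbabilityMeasure μ] (σ S : ℝ) (hσ : 0 < σ) (hS : 0 < S)
    (g₁ g₂ : D → ℝ) (hg₁ : Measurable g₁) (hg₂ : Measurable g₂)
    (hb₁ : ∀ x, |g₁ x| ≤ S) (hb₂ : ∀ x, |g₂ x| ≤ S) :
    ((1 - Real.exp (-S ^ 2 / (2 * σ ^ 2))) / (4 * S ^ 2)) * ∫ x, (g₁ x - g₂ x) ^ 2 ∂μ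
      ≤ ∫ x, (∫ y, (Real.sqrt (pdens σ (g₁ x) y) - Real.sqrt (pdens σ (g₂ x) y)) ^ 2) ∂μ := by
  set c : ℝ := (1 - Real.exp (-S ^ 2 / (2 * σ ^ 2))) / (4 * S ^ 2) with hc
  simp_rw [inner_hellinger hσ]
  rw [← MeasureTheory.integral_const_mul]
  have hdb : ∀ x, (g₁ x - g₂ x) ^ 2 ≤ 4 * S ^ 2 := by
    intro x
    have h1 := abs_le.1 (hb₁ x)
    have h2 := abs_le.1 (hb₂ x)
    nlinarith
  have hint1 : Integrable (fun x => c * (g₁ x - g₂ x) ^ 2) μ := by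
    refine (integrable_const (|c| * (4 * S ^ 2))).mono' ?_ (ae_of_all _ fun x => ?_)
    · exact ((hg₁.sub hg₂).pow_const 2).const_mul c |>.aestronglyMeasurable
    · rw [Real.norm_eq_abs, abs_mul]
      have h0 : |(g₁ x - g₂ x) ^ 2| = (g₁ x - g₂ x) ^ 2 := abs_of_nonneg (sq_nonneg _)
      rw [h0]
      exact mul_le_mul_of_nonneg_left (hdb x) (abs_nonneg c)
  have hint2 : Integrable (fun x => 2 - 2 * Real.exp (-(g₁ x - g₂ x) ^ 2 / (8 * σ ^ 2))) μ := by
    refine (integrable_const (4 : ℝ)).mono' ?_ (ae_of_all _ fun x => ?_)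
    · exact (measurable_const.sub
        ((((((hg₁.sub hg₂).pow_const 2).neg).div_const _).exp).const_mul 2)).aestronglyMeasurable
    · rw [Real.norm_eq_abs, abs_le]
      have h1 : 0 < Real.exp (-(g₁ x - g₂ x) ^ 2 / (8 * σ ^ 2)) := Real.exp_pos _
      have h2 : Real.exp (-(g₁ x - g₂ x) ^ 2 / (8 * σ ^ 2)) ≤ 1 := by
        rw [Real.exp_le_one_iff, neg_div]
        exact neg_nonpos.2 (by positivity)
      constructor <;> linarith
  refine integral_mono hint1 hint2 fun x => ?_
  have := pointwise_bound hσ hS (sq_nonneg (g₁ x - g₂ x)) (hdb x)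
  rw [neg_div] at this ⊢
  convert this using 3 <;> (try rfl) <;> ring
end

section
/- In the Gaussian regression model with true parameter F₀ and uniform bound sup_F ‖G(F)‖_∞ ≤ S, the second moment of the log-likelihood ratio satisfies E_{F₀}[(log(p_{F₀}(Y,X)/p_F(Y,X)))²] ≤ (2(S² + σ²)/σ⁴) ‖G(F₀) − G(F)‖²_{L²(D,μ)}. -/
open MeasureTheory Real ProbabilityTheory
open scoped NNReal ENNReal

lemma log_pdens_div (σ m₀ m y : ℝ) (hσ : 0 < σ) :
    Real.log (pdens σ m₀ y / pdens σ m y)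
      = ((y - m) ^ 2 - (y - m₀) ^ 2) / (2 * σ ^ 2) := by
  have hC : (0:ℝ) < (2 * Real.pi * σ ^ 2) ^ (-(1 / 2 : ℝ)) :=
    Real.rpow_pos_of_pos (by positivity) _
  unfold pdens
  rw [mul_div_mul_left _ _ (ne_of_gt hC), ← Real.exp_sub, Real.log_exp]
  ring

lemma rpow_two_eq (x : ℝ) : x ^ (2:ℝ) = x ^ 2 := by
  rw [show (2:ℝ) = ((2:ℕ):ℝ) by norm_num, Real.rpow_natCast]

lemma integrable_sq_exp : Integrable (fun x : ℝ => x ^ 2 * Real.exp (-(1/2) * x ^ 2)) := by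
  have h := integrable_rpow_mul_exp_neg_mul_sq (b := 1/2) (by norm_num) (s := 2) (by norm_num)
  refine h.congr (Filter.Eventually.of_forall fun x => ?_)
  simp only [rpow_two_eq]

lemma integral_sq_exp : ∫ x : ℝ, x ^ 2 * Real.exp (-(1/2) * x ^ 2) = Real.sqrt (2 * Real.pi) := by
  have habs : ∀ x : ℝ, x ^ 2 * Real.exp (-(1/2) * x ^ 2)
      = |x| ^ 2 * Real.exp (-(1/2) * |x| ^ 2) := fun x => by rw [sq_abs]
  have h1 : ∫ x : ℝ, x ^ 2 * Real.exp (-(1/2) * x ^ 2)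
      = 2 * ∫ x in Set.Ioi (0:ℝ), x ^ 2 * Real.exp (-(1/2) * x ^ 2) :=
    (integral_congr_ae (Filter.Eventually.of_forall habs)).trans
      (integral_comp_abs (f := fun x : ℝ => x ^ 2 * Real.exp (-(1/2) * x ^ 2)))
  have h2 : ∫ x in Set.Ioi (0:ℝ), x ^ 2 * Real.exp (-(1/2) * x ^ 2)
      = ((1:ℝ)/2) ^ (-((2:ℝ)+1)/2) * (1/2) * Real.Gamma (((2:ℝ)+1)/2) := by
    have h := integral_rpow_mul_exp_neg_mul_rpow (p := 2) (q := 2) (b := 1/2)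
      (by norm_num) (by norm_num) (by norm_num)
    rw [← h]
    refine setIntegral_congr_fun measurableSet_Ioi fun x _ => ?_
    simp only [rpow_two_eq]
  have hG : Real.Gamma (((2:ℝ)+1)/2) = (1/2) * Real.sqrt Real.pi := by
    rw [show ((2:ℝ)+1)/2 = (1/2 : ℝ) + 1 by norm_num,
      Real.Gamma_add_one (by norm_num), Real.Gamma_one_half_eq]
  have hpow : ((1:ℝ)/2) ^ (-((2:ℝ)+1)/2) = 2 * Real.sqrt 2 := by
    rw [show (-((2:ℝ)+1)/2 : ℝ) = -(3/2 : ℝ) by norm_num, one_div,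
      Real.inv_rpow (by norm_num), Real.rpow_neg (by norm_num), inv_inv,
      show (3/2 : ℝ) = 1 + (1/2 : ℝ) by norm_num,
      Real.rpow_add (by norm_num), Real.rpow_one, Real.sqrt_eq_rpow]
  rw [h1, h2, hG, hpow, Real.sqrt_mul (by norm_num)]
  ring

/-- The standard normal density as an `ℝ≥0`-valued function. -/
noncomputable def pdfNN (x : ℝ) : ℝ≥0 := Real.toNNReal (gaussianPDFReal 0 1 x)

lemma measurable_pdfNN : Measurable pdfNN :=
  (measurable_gaussianPDFReal 0 1).real_toNNReal

lemma gaussian01_withDensity :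
    gaussianReal 0 1 = volume.withDensity fun x => (pdfNN x : ℝ≥0∞) := by
  rw [gaussianReal_of_var_ne_zero _ one_ne_zero]; rfl

lemma pdf01_eq (x : ℝ) : gaussianPDFReal 0 1 x
    = (Real.sqrt (2 * Real.pi))⁻¹ * Real.exp (-(1/2) * x ^ 2) := by
  simp only [gaussianPDFReal, NNReal.coe_one, mul_one, sub_zero, one_div]
  ring_nf

lemma pdfNN_smul_sq (x : ℝ) : pdfNN x • x ^ 2
    = (Real.sqrt (2 * Real.pi))⁻¹ * (x ^ 2 * Real.exp (-(1/2) * x ^ 2)) := by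
  rw [NNReal.smul_def, smul_eq_mul, pdfNN,
    Real.coe_toNNReal _ (gaussianPDFReal_nonneg 0 1 x), pdf01_eq]
  ring

lemma integrable_sq_gaussian : Integrable (fun w : ℝ => w ^ 2) (gaussianReal 0 1) := by
  rw [gaussian01_withDensity, integrable_withDensity_iff_integrable_smul measurable_pdfNN]
  refine (integrable_sq_exp.const_mul ((Real.sqrt (2 * Real.pi))⁻¹)).congr
    (Filter.Eventually.of_forall fun x => ?_)
  exact (pdfNN_smul_sq x).symm

lemma integral_sq_gaussian : ∫ w, w ^ 2 ∂(gaussianReal 0 1) = 1 := by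
  rw [gaussian01_withDensity, integral_withDensity_eq_integral_smul measurable_pdfNN]
  rw [show (fun x : ℝ => pdfNN x • x ^ 2)
      = (fun x : ℝ => (Real.sqrt (2 * Real.pi))⁻¹ * (x ^ 2 * Real.exp (-(1/2) * x ^ 2)))
      from funext pdfNN_smul_sq, integral_const_mul, integral_sq_exp,
    inv_mul_cancel₀ (ne_of_gt (Real.sqrt_pos.mpr (by positivity)))]

/-- In the Gaussian regression model `Y = g₀(X) + σ W`, `X ∼ μ`, `W ∼ N(0,1)`
independent, with uniformly bounded regression functions, the second moment of
the log-likelihood ratio is at most `(2(S²+σ²)/σ⁴) ‖g₀ - g‖²_{L²(D,μ)}`. -/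
theorem kl_second_moment_le {D : Type*} [MeasurableSpace D] (μ : Measure D)
    [IsProbabilityMeasure μ] (σ S : ℝ) (hσ : 0 < σ)
    (g₀ g : D → ℝ) (hg₀ : Measurable g₀) (hg : Measurable g)
    (hb₀ : ∀ x, |g₀ x| ≤ S) (hb : ∀ x, |g x| ≤ S) :
    ∫ x, (∫ w, (Real.log
        (pdens σ (g₀ x) (g₀ x + σ * w) / pdens σ (g x) (g₀ x + σ * w))) ^ 2
        ∂(gaussianReal 0 1)) ∂μ
      ≤ (2 * (S ^ 2 + σ ^ 2) / σ ^ 4) * ∫ x, (g₀ x - g x) ^ 2 ∂μ := by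
  set c : ℝ := 2 * (S ^ 2 + σ ^ 2) / σ ^ 4 with hc
  have hσ2 : (0:ℝ) < σ ^ 2 := by positivity
  have hb2 : ∀ x, (g₀ x - g x) ^ 2 ≤ (2 * S) ^ 2 := by
    intro x
    have habs : |g₀ x - g x| ≤ 2 * S := by
      calc |g₀ x - g x| ≤ |g₀ x| + |g x| := abs_sub _ _
        _ ≤ 2 * S := by linarith [hb₀ x, hb x]
    calc (g₀ x - g x) ^ 2 = |g₀ x - g x| ^ 2 := (sq_abs _).symm
      _ ≤ (2 * S) ^ 2 := pow_le_pow_left₀ (abs_nonneg _) habs 2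
  have hlog : ∀ x w, Real.log
      (pdens σ (g₀ x) (g₀ x + σ * w) / pdens σ (g x) (g₀ x + σ * w))
      = ((g₀ x - g x) ^ 2 + 2 * (g₀ x - g x) * σ * w) / (2 * σ ^ 2) := by
    intro x w
    rw [log_pdens_div σ _ _ _ hσ]
    ring
  have hinner : ∀ x, (∫ w, (Real.log
      (pdens σ (g₀ x) (g₀ x + σ * w) / pdens σ (g x) (g₀ x + σ * w))) ^ 2
      ∂(gaussianReal 0 1)) ≤ c * (g₀ x - g x) ^ 2 := by
    intro x
    set Δ : ℝ := g₀ x - g x with hΔ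
    have hb2' : Δ ^ 2 ≤ (2 * S) ^ 2 := hb2 x
    have hint : Integrable (fun w : ℝ =>
        (2 * Δ ^ 4 + 8 * Δ ^ 2 * σ ^ 2 * w ^ 2) / (4 * σ ^ 4)) (gaussianReal 0 1) :=
      ((integrable_const _).add (integrable_sq_gaussian.const_mul _)).div_const _
    have hpt : ∀ w : ℝ, (Real.log
        (pdens σ (g₀ x) (g₀ x + σ * w) / pdens σ (g x) (g₀ x + σ * w))) ^ 2
        ≤ (2 * Δ ^ 4 + 8 * Δ ^ 2 * σ ^ 2 * w ^ 2) / (4 * σ ^ 4) := by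
      intro w
      rw [hlog x w, div_pow, show ((2 * σ ^ 2) ^ 2 : ℝ) = 4 * σ ^ 4 by ring]
      have hnum : (Δ ^ 2 + 2 * Δ * σ * w) ^ 2 ≤ 2 * Δ ^ 4 + 8 * Δ ^ 2 * σ ^ 2 * w ^ 2 := by
        nlinarith [sq_nonneg (Δ ^ 2 - 2 * Δ * σ * w)]
      gcongr
    have hle := integral_mono_of_nonneg
      (Filter.Eventually.of_forall fun w => sq_nonneg _) hint
      (Filter.Eventually.of_forall hpt)
    refine hle.trans ?_
    have hval : ∫ w, (2 * Δ ^ 4 + 8 * Δ ^ 2 * σ ^ 2 * w ^ 2) / (4 * σ ^ 4)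
        ∂(gaussianReal 0 1) = (2 * Δ ^ 4 + 8 * Δ ^ 2 * σ ^ 2) / (4 * σ ^ 4) := by
      rw [integral_div, integral_add (integrable_const _)
        (integrable_sq_gaussian.const_mul _), integral_const, integral_const_mul,
        integral_sq_gaussian, probReal_univ]
      simp
    rw [hval, hc, show (2 * (S ^ 2 + σ ^ 2) / σ ^ 4) * Δ ^ 2
      = (8 * (S ^ 2 + σ ^ 2) * Δ ^ 2) / (4 * σ ^ 4) by ring]
    have h4 : Δ ^ 4 ≤ 4 * S ^ 2 * Δ ^ 2 := by
      nlinarith [mul_le_mul_of_nonneg_right hb2' (sq_nonneg Δ)]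
    gcongr
    nlinarith [h4]
  have hintout : Integrable (fun x => c * (g₀ x - g x) ^ 2) μ := by
    refine Integrable.const_mul ?_ c
    refine (integrable_const ((2 * S) ^ 2)).mono'
      (((hg₀.sub hg).pow_const 2).aestronglyMeasurable)
      (Filter.Eventually.of_forall fun x => ?_)
    rw [Real.norm_eq_abs, abs_of_nonneg (sq_nonneg _)]
    exact hb2 x
  have hmono := integral_mono_of_nonneg
    (Filter.Eventually.of_forall fun x =>
      integral_nonneg fun w => sq_nonneg _) hintout
    (Filter.Eventually.of_forall hinner)
  calc _ ≤ ∫ x, c * (g₀ x - g x) ^ 2 ∂μ := hmono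
    _ = c * ∫ x, (g₀ x - g x) ^ 2 ∂μ := integral_const_mul _ _
end
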